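/- In the directed hitting-set gadget graph G(H) (with k ≥ 2, ρ = k + d where d is the uniform hyperedge size), a vertex fails to have a (k,ρ)-ball if and only if it is of the form s_e for some hyperedge e; each s_e reaches exactly ρ − 1 vertices within k hops and can reach T_2 only in k+1 hops. -/

import Mathlib

open scoped ENNReal Classical

/-- A walk from `u` is recorded as the list `p` of vertices visited after `u`;
it ends at `v` if the last vertex of `u :: p` is `v`. -/
def WalkEnds {V : Type*} (u : V) (p : List V) (v : V) : Prop := p.getLastD u = v

/-- A weighted (di)graph on vertex set `V`: weight `⊤` means "no edge". -/
structure WGraph (V : Type*) where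
  w : V → V → ℝ≥0∞

namespace WGraph

variable {V : Type*} (G : WGraph V)

/-- Total weight of the walk `u :: p`. -/
noncomputable def walkWeight : V → List V → ℝ≥0∞
  | _, [] => 0
  | u, v :: p => G.w u v + walkWeight v p

/-- Weight distance. -/
noncomputable def dist (u v : V) : ℝ≥0∞ :=
  sInf {c | ∃ p : List V, WalkEnds u p v ∧ G.walkWeight u p = c}

/-- Hop distance: the minimum number of edges among minimum-weight walks;
`⊤` if `v` is unreachable from `u`. -/
noncomputable def hopdist (u v : V) : ℕ∞ :=
  if G.dist u v = ⊤ then ⊤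
  else sInf {n : ℕ∞ | ∃ p : List V, WalkEnds u p v ∧
    G.walkWeight u p = G.dist u v ∧ (p.length : ℕ∞) = n}

/-- The set of vertices reachable from `u`, other than `u` itself. -/
def Reach (u : V) : Set V := {v | v ≠ u ∧ G.dist u v ≠ ⊤}

/-- `S` is a `ρ`-closest neighbor set of `u`. -/
def IsClosest (ρ : ℕ) (u : V) (S : Set V) : Prop :=
  S ⊆ G.Reach u ∧ S.ncard = min (G.Reach u).ncard ρ ∧
    ∀ v ∈ S, ∀ x ∈ G.Reach u \ S, G.dist u v ≤ G.dist u x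

/-- `u` has a `(k,ρ)`-ball: some `ρ`-closest neighbor set lies within hop distance `k`. -/
def HasBall (k ρ : ℕ) (u : V) : Prop :=
  ∃ S : Set V, G.IsClosest ρ u S ∧ ∀ v ∈ S, G.hopdist u v ≤ (k : ℕ∞)

/-- `G` is a `(k,ρ)`-graph. -/
def IsKRhoGraph (k ρ : ℕ) : Prop := ∀ u, G.HasBall k ρ u

/-- `G` is undirected (symmetric weights). -/
def Symm : Prop := ∀ u v, G.w u v = G.w v u

/-- All edge weights are strictly positive (trivial for non-edges of weight `⊤`). -/
def Positive : Prop := ∀ u v, 0 < G.w u v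

/-- `(u,v)` is a (potential) shortcut: `v` is reachable from `u` and the hop distance
exceeds `1`. -/
def IsShortcut (u v : V) : Prop := G.dist u v ≠ ⊤ ∧ 1 < G.hopdist u v

/-- Add each pair in `S` as a directed edge of weight `G.dist`. -/
noncomputable def addD (S : Set (V × V)) : WGraph V :=
  ⟨fun a b => G.w a b ⊓ sInf {c | (a, b) ∈ S ∧ c = G.dist a b}⟩

/-- Add each pair in `S` as an undirected edge of weight `G.dist`. -/
noncomputable def addU (S : Set (V × V)) : WGraph V :=
  ⟨fun a b => G.w a b ⊓ sInf {c | ((a, b) ∈ S ∨ (b, a) ∈ S) ∧ c = G.dist a b}⟩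

/-- `S` is a (directed) `(k,ρ)`-shortcut set for `G`. -/
def IsShortcutSetD (k ρ : ℕ) (S : Set (V × V)) : Prop :=
  (∀ p ∈ S, G.IsShortcut p.1 p.2) ∧ (G.addD S).IsKRhoGraph k ρ ∧
    ∀ x y, (G.addD S).dist x y = G.dist x y

/-- `S` is an (undirected) `(k,ρ)`-shortcut set for `G`. -/
def IsShortcutSetU (k ρ : ℕ) (S : Set (V × V)) : Prop :=
  (∀ p ∈ S, G.IsShortcut p.1 p.2) ∧ (G.addU S).IsKRhoGraph k ρ ∧
    ∀ x y, (G.addU S).dist x y = G.dist x y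

end WGraph

/-- Vertices of the hitting-set gadget graph: for each hyperedge `e` the path vertices
`pv e 0, …, pv e (k-2)` (so `s_e = pv e 0` and `t_e = pv e (k-2)`), a vertex `hv v`
for each hypergraph vertex `v`, and the two terminals `T1`, `T2`. -/
inductive GV (α ε : Type*) where
  | pv : ε → ℕ → GV α ε
  | hv : α → GV α ε
  | T1 : GV α ε
  | T2 : GV α ε

/-- Edge weights of the directed hitting-set gadget graph. -/
noncomputable def gadgetW {α ε : Type*} [DecidableEq α] [DecidableEq ε]
    (k : ℕ) (E : ε → Finset α) : GV α ε → GV α ε → ℝ≥0∞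
  | .pv e i, .pv e' j => if e = e' ∧ j = i + 1 ∧ j ≤ k - 2 then 1 else ⊤
  | .pv e i, .hv v => if i = k - 2 ∧ v ∈ E e then 3 else ⊤
  | .hv _, .T1 => 1
  | .T1, .T2 => 1
  | _, _ => ⊤

/-- The directed hitting-set gadget graph `G(H)`. -/
noncomputable def gadget {α ε : Type*} [DecidableEq α] [DecidableEq ε]
    (k : ℕ) (E : ε → Finset α) : WGraph (GV α ε) :=
  ⟨gadgetW k E⟩

/-- The undirected hitting-set gadget graph: every directed edge replaced by an
undirected edge of the same weight. -/
noncomputable def ugadget {α ε : Type*} [DecidableEq α] [DecidableEq ε]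
    (k : ℕ) (E : ε → Finset α) : WGraph (GV α ε) :=
  ⟨fun a b => gadgetW k E a b ⊓ gadgetW k E b a⟩

/-- `U` is a hitting set of the hypergraph with hyperedges `E`. -/
def IsHittingSet {α ε : Type*} (E : ε → Finset α) (U : Finset α) : Prop :=
  ∀ e, ∃ v ∈ U, v ∈ E e

/-! ### Auxiliary development -/

section AuxGeneral

variable {V : Type*}

lemma walkWeight_cons (G : WGraph V) (u v : V) (p : List V) :
    G.walkWeight u (v :: p) = G.w u v + G.walkWeight v p := rfl

lemma walkWeight_nil (G : WGraph V) (u : V) : G.walkWeight u [] = 0 := rfl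

lemma dist_le_walk (G : WGraph V) {u v : V} {p : List V} (h : WalkEnds u p v) :
    G.dist u v ≤ G.walkWeight u p := sInf_le ⟨p, h, rfl⟩

lemma pot_walk (G : WGraph V) (δ : V → ℝ≥0∞) (hδ : ∀ a b, δ b ≤ δ a + G.w a b)
    (p : List V) : ∀ u : V, δ (p.getLastD u) ≤ δ u + G.walkWeight u p := by
  induction p with
  | nil => intro u; simp [walkWeight_nil]
  | cons v q ih =>
    intro u
    calc δ ((v :: q).getLastD u) = δ (q.getLastD v) := by rw [List.getLastD_cons]
      _ ≤ δ v + G.walkWeight v q := ih v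
      _ ≤ (δ u + G.w u v) + G.walkWeight v q := add_le_add_left (hδ u v) _
      _ = δ u + G.walkWeight u (v :: q) := by rw [walkWeight_cons]; ring

lemma pot_dist (G : WGraph V) (δ : V → ℝ≥0∞) (hδ : ∀ a b, δ b ≤ δ a + G.w a b)
    {u : V} (hu : δ u = 0) (v : V) : δ v ≤ G.dist u v := by
  refine le_sInf ?_
  rintro c ⟨p, hp, rfl⟩
  have h := pot_walk G δ hδ p u
  rw [hu, zero_add, hp] at h
  exact h

lemma walkWeight_append (G : WGraph V) (p : List V) :
    ∀ (q : List V) (u : V),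
      G.walkWeight u (p ++ q) = G.walkWeight u p + G.walkWeight (p.getLastD u) q := by
  induction p with
  | nil => intro q u; simp [walkWeight_nil]
  | cons v r ih =>
    intro q u
    rw [List.cons_append, walkWeight_cons, walkWeight_cons, List.getLastD_cons, ih]
    ring

lemma getLastD_append (p : List V) :
    ∀ (q : List V) (u : V), (p ++ q).getLastD u = q.getLastD (p.getLastD u) := by
  induction p with
  | nil => intro q u; rfl
  | cons v r ih => intro q u; rw [List.cons_append, List.getLastD_cons, List.getLastD_cons, ih]

lemma hasBall_of (G : WGraph V) (k ρ : ℕ) (u : V)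
    (hcard : (G.Reach u).ncard ≤ ρ)
    (hhop : ∀ v ∈ G.Reach u, G.hopdist u v ≤ (k : ℕ∞)) : G.HasBall k ρ u :=
  ⟨G.Reach u, ⟨subset_rfl, by rw [min_eq_left hcard], fun v _ x hx => by simp at hx⟩, hhop⟩

end AuxGeneral

section AuxGadget

variable {α ε : Type*} [DecidableEq α] [DecidableEq ε]

/-- the level of a vertex -/
def Lfun (k : ℕ) : GV α ε → ℕ
  | .pv _ i => i
  | .hv _ => k - 1
  | .T1 => k
  | .T2 => k + 1

/-- the true distance function of the gadget graph -/
noncomputable def Dfun (k : ℕ) (E : ε → Finset α) : GV α ε → GV α ε → ℝ≥0∞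
  | .pv e i, .pv e' j =>
      if e = e' ∧ i = j then 0
      else if e = e' ∧ i ≤ j ∧ j ≤ k - 2 then ((j - i : ℕ) : ℝ≥0∞) else ⊤
  | .pv e i, .hv v => if v ∈ E e ∧ i ≤ k - 2 then ((k - 2 - i + 3 : ℕ) : ℝ≥0∞) else ⊤
  | .pv _ i, .T1 => if i ≤ k - 2 then ((k - 2 - i + 4 : ℕ) : ℝ≥0∞) else ⊤
  | .pv _ i, .T2 => if i ≤ k - 2 then ((k - 2 - i + 5 : ℕ) : ℝ≥0∞) else ⊤
  | .hv _, .pv _ _ => ⊤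
  | .hv v, .hv w => if v = w then 0 else ⊤
  | .hv _, .T1 => 1
  | .hv _, .T2 => 2
  | .T1, .pv _ _ => ⊤
  | .T1, .hv _ => ⊤
  | .T1, .T1 => 0
  | .T1, .T2 => 1
  | .T2, .pv _ _ => ⊤
  | .T2, .hv _ => ⊤
  | .T2, .T1 => ⊤
  | .T2, .T2 => 0

variable (k : ℕ) (E : ε → Finset α)

lemma Dfun_self (u : GV α ε) : Dfun k E u u = 0 := by
  cases u <;> simp [Dfun]

lemma gadget_w (a b : GV α ε) : (gadget k E).w a b = gadgetW k E a b := rfl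

lemma edge_level (hk : 2 ≤ k) (a b : GV α ε) (h : gadgetW k E a b ≠ ⊤) :
    Lfun k b = Lfun k a + 1 := by
  cases a <;> cases b <;> simp only [gadgetW, Lfun] at h ⊢
  all_goals try exact absurd rfl h
  all_goals try split_ifs at h with hc
  all_goals first | omega | exact absurd rfl h

lemma walk_level (hk : 2 ≤ k) (p : List (GV α ε)) :
    ∀ u : GV α ε, (gadget k E).walkWeight u p ≠ ⊤ →
      Lfun k (p.getLastD u) = Lfun k u + p.length := by
  induction p with
  | nil => intro u _; simp
  | cons v q ih =>
    intro u h
    rw [walkWeight_cons] at h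
    have h1 : gadgetW k E u v ≠ ⊤ := fun ht => h (by rw [gadget_w, ht, top_add])
    have h2 : (gadget k E).walkWeight v q ≠ ⊤ := fun ht => h (by rw [ht, add_top])
    rw [List.getLastD_cons, ih v h2, edge_level k E hk u v h1, List.length_cons]
    ring

lemma Dfun_triangle (hk : 2 ≤ k) (u a b : GV α ε) :
    Dfun k E u b ≤ Dfun k E u a + gadgetW k E a b := by
  by_cases hab : gadgetW k E a b = ⊤
  · rw [hab, add_top]; exact le_top
  by_cases hua : Dfun k E u a = ⊤
  · rw [hua, top_add]; exact le_top
  cases a with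
  | pv f i =>
    cases b with
    | pv f' j =>
      by_cases hc : f = f' ∧ j = i + 1 ∧ j ≤ k - 2
      case neg => exact absurd (by simp only [gadgetW, if_neg hc]) hab
      obtain ⟨rfl, rfl, hj⟩ := hc
      cases u with
      | pv e i0 =>
        have hif : gadgetW k E (GV.pv f i) (GV.pv f (i + 1)) = 1 := by
          simp [gadgetW, hj]
        rw [hif]
        by_cases he : e = f
        · subst he
          by_cases hii : i0 ≤ i ∧ i ≤ k - 2
          · have ha : Dfun k E (GV.pv e i0) (GV.pv e i) = ((i - i0 : ℕ) : ℝ≥0∞) := by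
              by_cases h0 : i0 = i
              · subst h0; simp [Dfun]
              · simp [Dfun, h0, hii.1, hii.2]
            have hb : Dfun k E (GV.pv e i0) (GV.pv e (i + 1)) = ((i + 1 - i0 : ℕ) : ℝ≥0∞) := by
              have h0 : ¬ i0 = i + 1 := by omega
              simp [Dfun, h0, show i0 ≤ i + 1 by omega, hj]
            rw [ha, hb]
            rw [show i + 1 - i0 = (i - i0) + 1 by omega]
            push_cast
            exact le_refl _
          · refine absurd ?_ hua
            simp only [Dfun]
            rw [if_neg (by intro hc; exact hii ⟨by omega, by omega⟩),
              if_neg (by intro hc; exact hii ⟨hc.2.1, by omega⟩)]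
        · refine absurd ?_ hua
          simp only [Dfun]
          rw [if_neg (fun hc => he hc.1), if_neg (fun hc => he hc.1)]
      | hv v => exact absurd rfl hua
      | T1 => exact absurd rfl hua
      | T2 => exact absurd rfl hua
    | hv w =>
      by_cases hc : i = k - 2 ∧ w ∈ E f
      case neg => exact absurd (by simp only [gadgetW, if_neg hc]) hab
      obtain ⟨rfl, hw⟩ := hc
      cases u with
      | pv e i0 =>
        have hif : gadgetW k E (GV.pv f (k - 2)) (GV.hv w) = 3 := by
          simp [gadgetW, hw]
        rw [hif]
        by_cases he : e = f
        · subst he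
          by_cases hii : i0 ≤ k - 2
          · have ha : Dfun k E (GV.pv e i0) (GV.pv e (k - 2)) = ((k - 2 - i0 : ℕ) : ℝ≥0∞) := by
              by_cases h0 : i0 = k - 2
              · subst h0; simp [Dfun]
              · simp [Dfun, h0, hii]
            have hb : Dfun k E (GV.pv e i0) (GV.hv w) = ((k - 2 - i0 + 3 : ℕ) : ℝ≥0∞) := by
              simp [Dfun, hw, hii]
            rw [ha, hb]
            push_cast
            rw [add_comm]
          · refine absurd ?_ hua
            simp only [Dfun]
            rw [if_neg (by intro hc; exact hii (by omega)),
              if_neg (by intro hc; exact hii (by omega))]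
        · refine absurd ?_ hua
          simp only [Dfun]
          rw [if_neg (fun hc => he hc.1), if_neg (fun hc => he hc.1)]
      | hv v => exact absurd rfl hua
      | T1 => exact absurd rfl hua
      | T2 => exact absurd rfl hua
    | T1 => exact absurd rfl hab
    | T2 => exact absurd rfl hab
  | hv w =>
    cases b with
    | pv f' j => exact absurd rfl hab
    | hv w' => exact absurd rfl hab
    | T1 =>
      have hif : gadgetW k E (GV.hv w) GV.T1 = 1 := rfl
      rw [hif]
      cases u with
      | pv e i0 =>
        by_cases hc : w ∈ E e ∧ i0 ≤ k - 2
        case neg => exact absurd (by simp only [Dfun, if_neg hc]) hua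
        obtain ⟨hw, hii⟩ := hc
        have ha : Dfun k E (GV.pv e i0) (GV.hv w) = ((k - 2 - i0 + 3 : ℕ) : ℝ≥0∞) := by
          simp [Dfun, hw, hii]
        have hb : Dfun k E (GV.pv e i0) GV.T1 = ((k - 2 - i0 + 4 : ℕ) : ℝ≥0∞) := by
          simp [Dfun, hii]
        rw [ha, hb, show k - 2 - i0 + 4 = (k - 2 - i0 + 3) + 1 by omega]
        push_cast
        exact le_refl _
      | hv v =>
        have hb : Dfun k E (GV.hv v) GV.T1 = 1 := rfl
        rw [hb]
        exact le_add_self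
      | T1 =>
        have hb : Dfun k E GV.T1 GV.T1 = 0 := rfl
        rw [hb]; exact zero_le
      | T2 => exact absurd rfl hua
    | T2 => exact absurd rfl hab
  | T1 =>
    cases b with
    | pv f' j => exact absurd rfl hab
    | hv w' => exact absurd rfl hab
    | T1 => exact absurd rfl hab
    | T2 =>
      have hif : gadgetW k E GV.T1 GV.T2 = 1 := rfl
      rw [hif]
      cases u with
      | pv e i0 =>
        by_cases hii : i0 ≤ k - 2
        case neg => exact absurd (by simp only [Dfun, if_neg hii]) hua
        have ha : Dfun k E (GV.pv e i0) GV.T1 = ((k - 2 - i0 + 4 : ℕ) : ℝ≥0∞) := by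
          simp [Dfun, hii]
        have hb : Dfun k E (GV.pv e i0) GV.T2 = ((k - 2 - i0 + 5 : ℕ) : ℝ≥0∞) := by
          simp [Dfun, hii]
        rw [ha, hb, show k - 2 - i0 + 5 = (k - 2 - i0 + 4) + 1 by omega]
        push_cast
        exact le_refl _
      | hv v =>
        have ha : Dfun k E (GV.hv v) GV.T1 = 1 := rfl
        have hb : Dfun k E (GV.hv v) GV.T2 = 2 := rfl
        rw [ha, hb]; norm_num
      | T1 =>
        have ha : Dfun k E GV.T1 GV.T1 = 0 := rfl
        have hb : Dfun k E GV.T1 GV.T2 = 1 := rfl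
        rw [ha, hb, zero_add]
      | T2 =>
        have hb : Dfun k E GV.T2 GV.T2 = 0 := rfl
        rw [hb]; exact zero_le
  | T2 => cases b <;> exact absurd rfl hab

/-- the path walk along a hyperedge path -/
def wkP (e : ε) (i m : ℕ) : List (GV α ε) :=
  (List.range m).map fun t => GV.pv e (i + 1 + t)

lemma wkP_succ (e : ε) (i m : ℕ) :
    wkP (α := α) e i (m + 1) = GV.pv e (i + 1) :: wkP e (i + 1) m := by
  simp only [wkP, List.range_succ_eq_map, List.map_cons, List.map_map]
  refine congrArg₂ List.cons rfl ?_
  apply List.map_congr_left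
  intro t _
  simp only [Function.comp_apply]
  congr 1
  omega

lemma wkP_ends (e : ε) (m : ℕ) :
    ∀ i, (wkP (α := α) e i m).getLastD (GV.pv e i) = GV.pv e (i + m) := by
  induction m with
  | zero => intro i; simp [wkP]
  | succ m ih =>
    intro i
    rw [wkP_succ, List.getLastD_cons, ih (i + 1)]
    congr 1
    omega

lemma wkP_weight (e : ε) (m : ℕ) :
    ∀ i, i + m ≤ k - 2 →
      (gadget k E).walkWeight (GV.pv e i) (wkP e i m) = (m : ℝ≥0∞) := by
  induction m with
  | zero => intro i _; simp [wkP, walkWeight_nil]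
  | succ m ih =>
    intro i h
    rw [wkP_succ, walkWeight_cons]
    have hw : (gadget k E).w (GV.pv e i) (GV.pv e (i + 1)) = 1 := by
      rw [gadget_w]
      simp [gadgetW, show i + 1 ≤ k - 2 by omega]
    rw [hw, ih (i + 1) (by omega)]
    push_cast
    ring

lemma weight_hv_step (e : ε) {w : α} (hw : w ∈ E e) :
    (gadget k E).w (GV.pv e (k - 2)) (GV.hv w) = 3 := by
  rw [gadget_w]; simp [gadgetW, hw]

lemma exists_walk (hE : ∀ e, (E e).Nonempty) (u v : GV α ε)
    (h : Dfun k E u v ≠ ⊤) :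
    ∃ p, WalkEnds u p v ∧ (gadget k E).walkWeight u p = Dfun k E u v := by
  cases u with
  | pv e i =>
    cases v with
    | pv f j =>
      by_cases h1 : e = f ∧ i = j
      · obtain ⟨rfl, rfl⟩ := h1
        exact ⟨[], rfl, by rw [walkWeight_nil, Dfun_self]⟩
      · by_cases h2 : e = f ∧ i ≤ j ∧ j ≤ k - 2
        · obtain ⟨rfl, hij, hjk⟩ := h2
          refine ⟨wkP e i (j - i), ?_, ?_⟩
          · show (wkP e i (j - i)).getLastD (GV.pv e i) = GV.pv e j
            rw [wkP_ends]
            congr 1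
            omega
          · rw [wkP_weight k E e (j - i) i (by omega)]
            have hne : ¬ i = j := fun hh => h1 ⟨rfl, hh⟩
            simp [Dfun, hne, hij, hjk]
        · exact absurd (by simp only [Dfun, if_neg h1, if_neg h2]) h
    | hv w =>
      by_cases h1 : w ∈ E e ∧ i ≤ k - 2
      · obtain ⟨hw, hik⟩ := h1
        refine ⟨wkP e i (k - 2 - i) ++ [GV.hv w], ?_, ?_⟩
        · show _ = GV.hv w
          rw [getLastD_append, wkP_ends]
          rfl
        · rw [walkWeight_append, wkP_weight k E e (k - 2 - i) i (by omega), wkP_ends,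
            show i + (k - 2 - i) = k - 2 by omega, walkWeight_cons,
            weight_hv_step k E e hw, walkWeight_nil]
          rw [show Dfun k E (GV.pv e i) (GV.hv w) = ((k - 2 - i + 3 : ℕ) : ℝ≥0∞) from by
            simp [Dfun, hw, hik]]
          push_cast
          ring
      · exact absurd (by simp only [Dfun, if_neg h1]) h
    | T1 =>
      by_cases h1 : i ≤ k - 2
      · obtain ⟨w, hw⟩ := hE e
        refine ⟨wkP e i (k - 2 - i) ++ [GV.hv w, GV.T1], ?_, ?_⟩
        · show _ = GV.T1
          rw [getLastD_append, wkP_ends]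
          rfl
        · rw [walkWeight_append, wkP_weight k E e (k - 2 - i) i (by omega), wkP_ends,
            show i + (k - 2 - i) = k - 2 by omega, walkWeight_cons, walkWeight_cons,
            weight_hv_step k E e hw, walkWeight_nil]
          have hw1 : (gadget k E).w (GV.hv w) GV.T1 = 1 := rfl
          rw [hw1]
          rw [show Dfun k E (GV.pv e i) GV.T1 = ((k - 2 - i + 4 : ℕ) : ℝ≥0∞) from by
            simp [Dfun, h1]]
          push_cast
          ring
      · exact absurd (by simp only [Dfun, if_neg h1]) h
    | T2 =>
      by_cases h1 : i ≤ k - 2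
      · obtain ⟨w, hw⟩ := hE e
        refine ⟨wkP e i (k - 2 - i) ++ [GV.hv w, GV.T1, GV.T2], ?_, ?_⟩
        · show _ = GV.T2
          rw [getLastD_append, wkP_ends]
          rfl
        · rw [walkWeight_append, wkP_weight k E e (k - 2 - i) i (by omega), wkP_ends,
            show i + (k - 2 - i) = k - 2 by omega, walkWeight_cons, walkWeight_cons,
            walkWeight_cons, weight_hv_step k E e hw, walkWeight_nil]
          have hw1 : (gadget k E).w (GV.hv w) GV.T1 = 1 := rfl
          have hw2 : (gadget k E).w GV.T1 GV.T2 = 1 := rfl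
          rw [hw1, hw2]
          rw [show Dfun k E (GV.pv e i) GV.T2 = ((k - 2 - i + 5 : ℕ) : ℝ≥0∞) from by
            simp [Dfun, h1]]
          push_cast
          ring
      · exact absurd (by simp only [Dfun, if_neg h1]) h
  | hv w =>
    cases v with
    | pv f j => exact absurd rfl h
    | hv w' =>
      by_cases h1 : w = w'
      · subst h1
        exact ⟨[], rfl, by rw [walkWeight_nil, Dfun_self]⟩
      · exact absurd (by simp only [Dfun, if_neg h1]) h
    | T1 =>
      refine ⟨[GV.T1], rfl, ?_⟩
      rw [walkWeight_cons, walkWeight_nil]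
      have hw1 : (gadget k E).w (GV.hv w) GV.T1 = 1 := rfl
      rw [hw1]
      simp [Dfun]
    | T2 =>
      refine ⟨[GV.T1, GV.T2], rfl, ?_⟩
      rw [walkWeight_cons, walkWeight_cons, walkWeight_nil]
      have hw1 : (gadget k E).w (GV.hv w) GV.T1 = 1 := rfl
      have hw2 : (gadget k E).w GV.T1 GV.T2 = 1 := rfl
      rw [hw1, hw2]
      show (1 : ℝ≥0∞) + (1 + 0) = Dfun k E (GV.hv w) GV.T2
      have : Dfun k E (GV.hv w) GV.T2 = 2 := rfl
      rw [this]
      norm_num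
  | T1 =>
    cases v with
    | pv f j => exact absurd rfl h
    | hv w' => exact absurd rfl h
    | T1 => exact ⟨[], rfl, by rw [walkWeight_nil, Dfun_self]⟩
    | T2 =>
      refine ⟨[GV.T2], rfl, ?_⟩
      rw [walkWeight_cons, walkWeight_nil]
      have hw2 : (gadget k E).w GV.T1 GV.T2 = 1 := rfl
      have : Dfun k E GV.T1 GV.T2 = 1 := rfl
      rw [hw2, this, add_zero]
  | T2 =>
    cases v with
    | pv f j => exact absurd rfl h
    | hv w' => exact absurd rfl h
    | T1 => exact absurd rfl h
    | T2 => exact ⟨[], rfl, by rw [walkWeight_nil, Dfun_self]⟩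

lemma gadget_dist_eq (hk : 2 ≤ k) (hE : ∀ e, (E e).Nonempty) (u v : GV α ε) :
    (gadget k E).dist u v = Dfun k E u v := by
  refine le_antisymm ?_
    (pot_dist _ (Dfun k E u) (fun a b => Dfun_triangle k E hk u a b) (Dfun_self k E u) v)
  by_cases h : Dfun k E u v = ⊤
  · rw [h]; exact le_top
  · obtain ⟨p, hp, hw⟩ := exists_walk k E hE u v h
    rw [← hw]
    exact dist_le_walk _ hp

lemma gadget_hopdist_eq (hk : 2 ≤ k) (hE : ∀ e, (E e).Nonempty) (u v : GV α ε)
    (h : Dfun k E u v ≠ ⊤) :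
    (gadget k E).hopdist u v = ((Lfun k v - Lfun k u : ℕ) : ℕ∞) := by
  have hd := gadget_dist_eq k E hk hE u v
  rw [WGraph.hopdist, if_neg (by rw [hd]; exact h)]
  obtain ⟨p, hp, hw⟩ := exists_walk k E hE u v h
  have hset : {n : ℕ∞ | ∃ q, WalkEnds u q v ∧
      (gadget k E).walkWeight u q = (gadget k E).dist u v ∧ ((q.length : ℕ) : ℕ∞) = n} =
      {((Lfun k v - Lfun k u : ℕ) : ℕ∞)} := by
    ext n
    simp only [Set.mem_setOf_eq, Set.mem_singleton_iff]
    constructor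
    · rintro ⟨q, hq, hwq, rfl⟩
      have hne : (gadget k E).walkWeight u q ≠ ⊤ := by rw [hwq, hd]; exact h
      have hl := walk_level k E hk q u hne
      rw [hq] at hl
      exact_mod_cast congrArg Nat.cast (by omega : q.length = Lfun k v - Lfun k u)
    · rintro rfl
      refine ⟨p, hp, by rw [hw, hd], ?_⟩
      have hne : (gadget k E).walkWeight u p ≠ ⊤ := by rw [hw]; exact h
      have hl := walk_level k E hk p u hne
      rw [hp] at hl
      exact_mod_cast congrArg Nat.cast (by omega : p.length = Lfun k v - Lfun k u)
  rw [hset, csInf_singleton]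

lemma reach_pv (hk : 2 ≤ k) (hE : ∀ e, (E e).Nonempty) (e : ε) (i : ℕ) (hi : i ≤ k - 2) :
    (gadget k E).Reach (GV.pv e i) =
      ↑((Finset.Ioc i (k - 2)).image (GV.pv e) ∪ (E e).image GV.hv ∪
        ({GV.T1, GV.T2} : Finset (GV α ε))) := by
  ext y
  simp only [WGraph.Reach, Set.mem_setOf_eq, Finset.coe_union, Set.mem_union,
    Finset.coe_image, Set.mem_image, Finset.mem_coe, Finset.mem_Ioc, Finset.coe_insert,
    Set.mem_insert_iff, Finset.coe_singleton, Set.mem_singleton_iff,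
    gadget_dist_eq k E hk hE]
  cases y with
  | pv f j =>
    constructor
    · rintro ⟨hne, hD⟩
      by_cases h2 : e = f ∧ i ≤ j ∧ j ≤ k - 2
      · obtain ⟨rfl, hij, hjk⟩ := h2
        have hij' : i ≠ j := fun hh => hne (by rw [hh])
        exact Or.inl (Or.inl ⟨j, ⟨by omega, hjk⟩, rfl⟩)
      · by_cases h1 : e = f ∧ i = j
        · exact absurd (by rw [h1.1, h1.2]) hne
        · exact absurd (by simp only [Dfun, if_neg h1, if_neg h2]) hD
    · rintro ((⟨a, ⟨hia, hak⟩, heq⟩ | ⟨w, hw, heq⟩) | heq | heq)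
      · obtain ⟨rfl, rfl⟩ : e = f ∧ a = j := by
          injection heq with h1 h2; exact ⟨h1, h2⟩
        refine ⟨?_, ?_⟩
        · simp only [ne_eq, GV.pv.injEq, not_and]
          intro _; omega
        · simp only [Dfun]
          split_ifs with hc1 hc2
          · simp
          · exact ENNReal.natCast_ne_top _
          · refine absurd ⟨?_, le_of_lt hia, hak⟩ hc2
            trivial
      · exact nomatch heq
      · exact nomatch heq
      · exact nomatch heq
  | hv w =>
    constructor
    · rintro ⟨-, hD⟩
      by_cases hw : w ∈ E e
      · exact Or.inl (Or.inr ⟨w, hw, rfl⟩)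
      · exact absurd (by simp only [Dfun, if_neg (by tauto : ¬(w ∈ E e ∧ i ≤ k - 2))]) hD
    · rintro ((⟨a, _, heq⟩ | ⟨w', hw', heq⟩) | heq | heq)
      · exact nomatch heq
      · obtain rfl : w' = w := by simpa using heq
        refine ⟨by simp, ?_⟩
        simp [Dfun, hw', hi]
      · exact nomatch heq
      · exact nomatch heq
  | T1 =>
    constructor
    · intro _; exact Or.inr (Or.inl rfl)
    · intro _
      refine ⟨by simp, ?_⟩
      simp [Dfun, hi]
  | T2 =>
    constructor
    · intro _; exact Or.inr (Or.inr rfl)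
    · intro _
      refine ⟨by simp, ?_⟩
      simp [Dfun, hi]

lemma reach_pv_far (hk : 2 ≤ k) (hE : ∀ e, (E e).Nonempty) (e : ε) (i : ℕ) (hi : k - 2 < i) :
    (gadget k E).Reach (GV.pv e i) = ∅ := by
  ext y
  simp only [WGraph.Reach, Set.mem_setOf_eq, Set.mem_empty_iff_false, iff_false, not_and,
    gadget_dist_eq k E hk hE]
  intro hne
  simp only [ne_eq, not_not]
  cases y with
  | pv f j =>
    simp only [Dfun]
    rw [if_neg (fun hc => hne (by rw [hc.1, hc.2])), if_neg (by intro hc; omega)]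
  | hv w => simp only [Dfun]; rw [if_neg (by intro hc; omega)]
  | T1 => simp only [Dfun]; rw [if_neg (by omega)]
  | T2 => simp only [Dfun]; rw [if_neg (by omega)]

lemma reach_hv (hk : 2 ≤ k) (hE : ∀ e, (E e).Nonempty) (v : α) :
    (gadget k E).Reach (GV.hv v) = {GV.T1, GV.T2} := by
  ext y
  simp only [WGraph.Reach, Set.mem_setOf_eq, gadget_dist_eq k E hk hE, Set.mem_insert_iff,
    Set.mem_singleton_iff]
  cases y with
  | pv f j => simp [Dfun]
  | hv w =>
    constructor
    · rintro ⟨hne, hD⟩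
      refine absurd ?_ hD
      simp only [Dfun]
      rw [if_neg (fun hh => hne (by rw [hh]))]
    · rintro (h | h) <;> exact nomatch h
  | T1 =>
    constructor
    · intro _; exact Or.inl rfl
    · intro _; exact ⟨by simp, by simp [Dfun]⟩
  | T2 =>
    constructor
    · intro _; exact Or.inr rfl
    · intro _; exact ⟨by simp, by simp [Dfun]⟩

lemma reach_T1 (hk : 2 ≤ k) (hE : ∀ e, (E e).Nonempty) :
    (gadget k E).Reach GV.T1 = {GV.T2} := by
  ext y
  simp only [WGraph.Reach, Set.mem_setOf_eq, gadget_dist_eq k E hk hE, Set.mem_singleton_iff]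
  cases y with
  | pv f j => simp [Dfun]
  | hv w => simp [Dfun]
  | T1 =>
    constructor
    · rintro ⟨hne, -⟩; exact absurd rfl hne
    · rintro h; exact nomatch h
  | T2 =>
    constructor
    · intro _; rfl
    · intro _; exact ⟨by simp, by simp [Dfun]⟩

lemma reach_T2 (hk : 2 ≤ k) (hE : ∀ e, (E e).Nonempty) :
    (gadget k E).Reach GV.T2 = ∅ := by
  ext y
  simp only [WGraph.Reach, Set.mem_setOf_eq, gadget_dist_eq k E hk hE,
    Set.mem_empty_iff_false, iff_false, not_and]
  intro hne
  simp only [ne_eq, not_not]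
  cases y with
  | pv f j => simp [Dfun]
  | hv w => simp [Dfun]
  | T1 => simp [Dfun]
  | T2 => exact absurd rfl hne

lemma reachF_card (e : ε) (i : ℕ) (d : ℕ) (hcard : (E e).card = d) :
    ((Finset.Ioc i (k - 2)).image (GV.pv e) ∪ (E e).image GV.hv ∪
      ({GV.T1, GV.T2} : Finset (GV α ε))).card = (k - 2 - i) + d + 2 := by
  have hinj1 : Function.Injective (GV.pv e : ℕ → GV α ε) := by
    intro a b hab; simpa using hab
  have hinj2 : Function.Injective (GV.hv : α → GV α ε) := by
    intro a b hab; simpa using hab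
  have hd1 : Disjoint ((Finset.Ioc i (k - 2)).image (GV.pv e)) ((E e).image GV.hv) := by
    simp only [Finset.disjoint_left, Finset.mem_image]
    rintro x ⟨a, -, rfl⟩ ⟨b, -, hb⟩
    exact nomatch hb
  have hd2 : Disjoint ((Finset.Ioc i (k - 2)).image (GV.pv e) ∪ (E e).image GV.hv)
      ({GV.T1, GV.T2} : Finset (GV α ε)) := by
    simp only [Finset.disjoint_left, Finset.mem_union, Finset.mem_image, Finset.mem_insert,
      Finset.mem_singleton]
    rintro x (⟨a, -, rfl⟩ | ⟨b, -, rfl⟩) h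
    · rcases h with h | h <;> exact nomatch h
    · rcases h with h | h <;> exact nomatch h
  rw [Finset.card_union_of_disjoint hd2, Finset.card_union_of_disjoint hd1,
    Finset.card_image_of_injective _ hinj1, Finset.card_image_of_injective _ hinj2,
    Nat.card_Ioc, hcard]
  rw [Finset.card_insert_of_notMem (by simp), Finset.card_singleton]

lemma hop_reach (hk : 2 ≤ k) (hE : ∀ e, (E e).Nonempty) (e : ε) (i : ℕ) (hi : i ≤ k - 2)
    (y : GV α ε) (hy : y ∈ (gadget k E).Reach (GV.pv e i)) :
    (gadget k E).hopdist (GV.pv e i) y = ((Lfun k y - i : ℕ) : ℕ∞) ∧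
      Lfun k y ≤ k + 1 ∧ (y = GV.T2 ∨ Lfun k y ≤ k) := by
  obtain ⟨hne, hD⟩ := hy
  rw [gadget_dist_eq k E hk hE] at hD
  have hL : Lfun k (GV.pv e i : GV α ε) = i := rfl
  refine ⟨by rw [gadget_hopdist_eq k E hk hE _ y hD, hL], ?_⟩
  cases y with
  | pv f j =>
    have hj : j ≤ k - 2 := by
      by_cases h1 : e = f ∧ i = j
      · omega
      · by_cases h2 : e = f ∧ i ≤ j ∧ j ≤ k - 2
        · omega
        · exact absurd (by simp only [Dfun, if_neg h1, if_neg h2]) hD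
    refine ⟨?_, Or.inr ?_⟩ <;> simp only [Lfun] <;> omega
  | hv w => refine ⟨?_, Or.inr ?_⟩ <;> simp only [Lfun] <;> omega
  | T1 => refine ⟨?_, Or.inr ?_⟩ <;> simp only [Lfun] <;> omega
  | T2 => exact ⟨le_refl _, Or.inl rfl⟩

lemma not_hasBall_s (hk : 2 ≤ k) (hE : ∀ e, (E e).Nonempty) (ρ d : ℕ) (hρ : ρ = k + d)
    (hcard : ∀ e, (E e).card = d) (e : ε) :
    ¬ (gadget k E).HasBall k ρ (GV.pv e 0) := by
  rintro ⟨S, ⟨hsub, hScard, -⟩, hhop⟩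
  have hre := reach_pv k E hk hE e 0 (Nat.zero_le _)
  have hfin : ((gadget k E).Reach (GV.pv e 0)).Finite := by
    rw [hre]; exact Finset.finite_toSet _
  have hnc : ((gadget k E).Reach (GV.pv e 0)).ncard = ρ := by
    rw [hre, Set.ncard_coe_finset, reachF_card k E e 0 d (hcard e)]
    omega
  have hS : S = (gadget k E).Reach (GV.pv e 0) := by
    apply Set.eq_of_subset_of_ncard_le hsub _ hfin
    rw [hScard, hnc, min_self]
  have hT2 : GV.T2 ∈ S := by rw [hS, hre]; simp
  have hh := hhop _ hT2
  rw [gadget_hopdist_eq k E hk hE _ _ (by simp [Dfun] : Dfun k E (GV.pv e 0) GV.T2 ≠ ⊤)] at hh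
  simp only [Lfun, Nat.sub_zero] at hh
  have : k + 1 ≤ k := by exact_mod_cast hh
  omega

end AuxGadget

/-- in the directed hitting-set gadget graph (k ≥ 2, ρ = k + d, all
hyperedges of size exactly d), a vertex fails to have a `(k,ρ)`-ball iff it is
`s_e = pv e 0` for some hyperedge `e`; each `s_e` reaches exactly `ρ - 1` vertices
within `k` hops, and reaches `T2` only in `k+1` hops. -/
theorem stmt10 {α ε : Type*} [Fintype α] [Fintype ε] [DecidableEq α] [DecidableEq ε]
    (k ρ d : ℕ) (hk : 2 ≤ k) (hd : 2 ≤ d) (hρ : ρ = k + d)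
    (E : ε → Finset α) (hcard : ∀ e, (E e).card = d)
    (hV : Nonempty ε → d + 1 ≤ Fintype.card α) :
    (∀ x : GV α ε, ¬ (gadget k E).HasBall k ρ x ↔ ∃ e : ε, x = GV.pv e 0) ∧
      ∀ e : ε,
        {y : GV α ε | y ≠ GV.pv e 0 ∧
            (gadget k E).hopdist (GV.pv e 0) y ≤ (k : ℕ∞)}.ncard = ρ - 1 ∧
          (gadget k E).hopdist (GV.pv e 0) GV.T2 = ((k + 1 : ℕ) : ℕ∞) := by
  have hE : ∀ e, (E e).Nonempty := fun e => Finset.card_pos.mp (by rw [hcard e]; omega)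
  constructor
  · intro x
    constructor
    · intro hx
      cases x with
      | pv e i =>
        refine ⟨e, ?_⟩
        by_contra hne
        have hi0 : i ≠ 0 := fun h => hne (by rw [h])
        refine hx ?_
        by_cases hik : i ≤ k - 2
        · apply hasBall_of
          · rw [reach_pv k E hk hE e i hik, Set.ncard_coe_finset,
              reachF_card k E e i d (hcard e)]
            omega
          · intro v hv
            obtain ⟨h1, h2, -⟩ := hop_reach k E hk hE e i hik v hv
            rw [h1]
            exact_mod_cast (by omega : Lfun k v - i ≤ k)
        · apply hasBall_of
          · rw [reach_pv_far k E hk hE e i (by omega)]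
            simp
          · intro v hv
            rw [reach_pv_far k E hk hE e i (by omega)] at hv
            exact absurd hv (Set.notMem_empty v)
      | hv v =>
        exfalso
        refine hx (hasBall_of _ k ρ _ ?_ ?_)
        · rw [reach_hv k E hk hE v, Set.ncard_pair (by simp : (GV.T1 : GV α ε) ≠ GV.T2)]
          omega
        · intro y hy
          rw [reach_hv k E hk hE v] at hy
          rcases hy with rfl | hy
          · rw [gadget_hopdist_eq k E hk hE _ _ (by simp [Dfun] : Dfun k E (GV.hv v) GV.T1 ≠ ⊤)]
            exact_mod_cast (by simp only [Lfun]; omega : Lfun k (GV.T1 : GV α ε) - Lfun k (GV.hv v : GV α ε) ≤ k)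
          · rw [Set.mem_singleton_iff] at hy
            subst hy
            rw [gadget_hopdist_eq k E hk hE _ _ (by simp [Dfun] : Dfun k E (GV.hv v) GV.T2 ≠ ⊤)]
            exact_mod_cast (by simp only [Lfun]; omega : Lfun k (GV.T2 : GV α ε) - Lfun k (GV.hv v : GV α ε) ≤ k)
      | T1 =>
        exfalso
        refine hx (hasBall_of _ k ρ _ ?_ ?_)
        · rw [reach_T1 k E hk hE, Set.ncard_singleton]
          omega
        · intro y hy
          rw [reach_T1 k E hk hE, Set.mem_singleton_iff] at hy
          subst hy
          rw [gadget_hopdist_eq k E hk hE _ _ (by simp [Dfun] : Dfun k E GV.T1 GV.T2 ≠ ⊤)]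
          exact_mod_cast (by simp only [Lfun]; omega : Lfun k (GV.T2 : GV α ε) - Lfun k (GV.T1 : GV α ε) ≤ k)
      | T2 =>
        exfalso
        refine hx (hasBall_of _ k ρ _ ?_ ?_)
        · rw [reach_T2 k E hk hE]
          simp
        · intro y hy
          rw [reach_T2 k E hk hE] at hy
          exact absurd hy (Set.notMem_empty y)
    · rintro ⟨e, rfl⟩
      exact not_hasBall_s k E hk hE ρ d hρ hcard e
  · intro e
    have hT2ne : Dfun k E (GV.pv e 0) GV.T2 ≠ ⊤ := by simp [Dfun]
    constructor
    · have hset : {y : GV α ε | y ≠ GV.pv e 0 ∧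
          (gadget k E).hopdist (GV.pv e 0) y ≤ (k : ℕ∞)} =
          (gadget k E).Reach (GV.pv e 0) \ {GV.T2} := by
        ext y
        simp only [Set.mem_setOf_eq, Set.mem_diff, Set.mem_singleton_iff]
        constructor
        · rintro ⟨hne, hhop⟩
          have hD : (gadget k E).dist (GV.pv e 0) y ≠ ⊤ := by
            intro hdt
            rw [WGraph.hopdist, if_pos hdt] at hhop
            rw [top_le_iff] at hhop
            exact absurd hhop.symm (by simp)
          refine ⟨⟨hne, hD⟩, ?_⟩
          rintro rfl
          rw [gadget_hopdist_eq k E hk hE _ _ hT2ne] at hhop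
          simp only [Lfun, Nat.sub_zero] at hhop
          have : k + 1 ≤ k := by exact_mod_cast hhop
          omega
        · rintro ⟨hy, hyT⟩
          refine ⟨hy.1, ?_⟩
          obtain ⟨h1, -, h3⟩ := hop_reach k E hk hE e 0 (Nat.zero_le _) y hy
          rw [h1]
          have hLy : Lfun k y ≤ k := by
            rcases h3 with h | h
            · exact absurd h hyT
            · exact h
          exact_mod_cast (by omega : Lfun k y - 0 ≤ k)
      rw [hset, reach_pv k E hk hE e 0 (Nat.zero_le _), ← Finset.coe_erase,
        Set.ncard_coe_finset, Finset.card_erase_of_mem (by simp),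
        reachF_card k E e 0 d (hcard e)]
      omega
    · rw [gadget_hopdist_eq k E hk hE _ _ hT2ne]
      simp only [Lfun, Nat.sub_zero]
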